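/- Let d ≥ 1 and T ≥ 1, let U₁, …, U_T be d × d unitary complex matrices, and let H_prop = Σ_{t=1}^{T} [(1/2)·I_d ⊗ (E_{t,t} + E_{t−1,t−1}) − (1/2)·U_t ⊗ E_{t,t−1} − (1/2)·U_t† ⊗ E_{t−1,t}] be the associated propagation Hamiltonian on ℂ^{d(T+1)}. Then every unit vector ψ orthogonal to the kernel of H_prop satisfies ⟨ψ, H_prop ψ⟩ ≥ 2/(T+1)²; equivalently, every nonzero eigenvalue of H_prop is at least 2/(T+1)². -/

import Mathlib

open Matrix
open scoped Kronecker ComplexOrder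

/-- The Feynman–Kitaev propagation Hamiltonian of the circuit `U_T ⋯ U₁` with an
explicit `(T+1)`-dimensional clock register:
`H_prop = Σ_t [(1/2)·I ⊗ (E_{t,t} + E_{t−1,t−1}) − (1/2)·U_t ⊗ E_{t,t−1} − (1/2)·U_t† ⊗ E_{t−1,t}]`. -/
noncomputable def Hprop (d T : ℕ) (U : Fin T → Matrix (Fin d) (Fin d) ℂ) :
    Matrix (Fin d × Fin (T + 1)) (Fin d × Fin (T + 1)) ℂ :=
  ∑ t : Fin T,
    ((1 / 2 : ℂ) • ((1 : Matrix (Fin d) (Fin d) ℂ) ⊗ₖ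
        (single t.succ t.succ (1 : ℂ) + single t.castSucc t.castSucc (1 : ℂ)))
      - (1 / 2 : ℂ) • (U t ⊗ₖ single t.succ t.castSucc (1 : ℂ))
      - (1 / 2 : ℂ) • ((U t)ᴴ ⊗ₖ single t.castSucc t.succ (1 : ℂ)))

namespace HpropAux
open Finset
open Finset

-- sum of distances bound: 2 * Σ_{r,s < n} |r-s| ≤ n^3
lemma dist_sum_bound (n : ℕ) :
    2 * ∑ r ∈ range n, ∑ s ∈ range n, Nat.dist r s ≤ n ^ 3 := by
  induction n with
  | zero => simp
  | succ n ih =>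
    have h1 : ∀ r ∈ range n, ∑ s ∈ range (n+1), Nat.dist r s
        = (∑ s ∈ range n, Nat.dist r s) + (n - r) := by
      intro r hr
      rw [Finset.sum_range_succ]
      congr 1
      exact Nat.dist_eq_sub_of_le (Nat.le_of_lt (mem_range.mp hr))
    have h2 : ∑ s ∈ range (n+1), Nat.dist n s = (∑ s ∈ range n, Nat.dist n s) + 0 := by
      rw [Finset.sum_range_succ]; simp
    have h3 : ∑ s ∈ range n, Nat.dist n s = ∑ s ∈ range n, (n - s) := by
      apply Finset.sum_congr rfl; intro s hs
      exact Nat.dist_eq_sub_of_le_right (Nat.le_of_lt (mem_range.mp hs))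
    have hg : ∑ s ∈ range n, (n - s) = ∑ s ∈ range (n+1), s := by
      rw [← Finset.sum_range_reflect (fun s => n - s) n, Finset.sum_range_succ']
      apply Finset.sum_congr rfl
      intro s hs
      simp only [mem_range] at hs
      omega
    have hgauss : 2 * ∑ s ∈ range (n+1), s = (n+1) * n := by
      have := Finset.sum_range_id_mul_two (n+1)
      simp only [Nat.add_sub_cancel] at this
      omega
    rw [Finset.sum_range_succ, Finset.sum_congr rfl h1, Finset.sum_add_distrib, h2, h3, hg]
    have : 2 * ∑ r ∈ range n, (n - r) = (n+1) * n := by rw [hg]; exact hgauss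
    nlinarith [ih]

variable {F : Type*} [NormedAddCommGroup F] [InnerProductSpace ℂ F]

open scoped InnerProductSpace in
lemma poincare (T : ℕ) (η : Fin (T+1) → F) (h0 : ∑ s, η s = 0) :
    4 * ∑ s, ‖η s‖^2 ≤ ((T:ℝ)+1)^2 * ∑ t : Fin T, ‖η t.succ - η t.castSucc‖^2 := by
  classical
  set D : ℝ := ∑ t : Fin T, ‖η t.succ - η t.castSucc‖^2 with hD
  have hDnn : 0 ≤ D := Finset.sum_nonneg fun t _ => sq_nonneg _
  set δ : ℕ → F := fun t => if h : t < T then η (Fin.succ ⟨t,h⟩) - η (Fin.castSucc ⟨t,h⟩) else 0 with hδ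
  -- telescoping
  have htel : ∀ r s : ℕ, ∀ _hrs : r ≤ s, ∀ _hsT : s ≤ T,
      η ⟨s, by omega⟩ - η ⟨r, by omega⟩ = ∑ i ∈ Finset.range (s - r), δ (r + i) := by
    intro r s hrs hsT
    have g : ℕ → F := fun k => 0
    have key := Finset.sum_range_sub (fun i => η ⟨min (r+i) T, by omega⟩) (s - r)
    have : ∀ i ∈ Finset.range (s - r),
        (η ⟨min (r+(i+1)) T, by omega⟩ - η ⟨min (r+i) T, by omega⟩) = δ (r+i) := by
      intro i hi
      simp only [Finset.mem_range] at hi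
      have h1 : r + i < T := by omega
      rw [hδ]
      simp only [dif_pos h1]
      congr 1 <;> [skip; skip] <;> congr 1 <;> [skip; skip]
      · ext; simp [Fin.succ]; omega
      · ext; simp [Fin.castSucc, Fin.castAdd, Fin.castLE]; omega
    rw [← Finset.sum_congr rfl this, key]
    congr 1 <;> (apply congrArg η; apply Fin.ext; simp; omega)
  -- pairwise bound
  have hpair : ∀ r s : Fin (T+1), ‖η s - η r‖^2 ≤ (Nat.dist r s : ℝ) * D := by
    have base : ∀ r s : ℕ, ∀ _hrs : r ≤ s, ∀ _hsT : s ≤ T,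
        ‖η ⟨s, by omega⟩ - η ⟨r, by omega⟩‖^2 ≤ ((s - r : ℕ) : ℝ) * D := by
      intro r s hrs hsT
      rw [htel r s hrs hsT]
      calc ‖∑ i ∈ Finset.range (s-r), δ (r+i)‖^2
          ≤ (∑ i ∈ Finset.range (s-r), ‖δ (r+i)‖)^2 := by
            have := norm_sum_le (Finset.range (s-r)) (fun i => δ (r+i))
            exact pow_le_pow_left₀ (norm_nonneg _) this 2
        _ ≤ (Finset.range (s-r)).card * ∑ i ∈ Finset.range (s-r), ‖δ (r+i)‖^2 :=
            sq_sum_le_card_mul_sum_sq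
        _ ≤ ((s - r : ℕ) : ℝ) * D := by
            rw [Finset.card_range]
            apply mul_le_mul_of_nonneg_left _ (by positivity)
            have hsub : ∑ i ∈ Finset.range (s-r), ‖δ (r+i)‖^2
                = ∑ t ∈ Finset.Ico r s, ‖δ t‖^2 := by
              rw [Finset.sum_Ico_eq_sum_range]
            rw [hsub]
            have h2 : ∑ t ∈ Finset.Ico r s, ‖δ t‖^2 ≤ ∑ t ∈ Finset.range T, ‖δ t‖^2 := by
              apply Finset.sum_le_sum_of_subset_of_nonneg
              · intro t ht
                simp only [Finset.mem_Ico, Finset.mem_range] at *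
                omega
              · intros; positivity
            refine h2.trans_eq ?_
            rw [hD, ← Fin.sum_univ_eq_sum_range (fun t => ‖δ t‖^2) T]
            apply Finset.sum_congr rfl
            intro t _
            simp only [hδ, dif_pos t.isLt]
    intro r s
    rcases le_total (r : ℕ) (s : ℕ) with h | h
    · have := base r s h (by omega)
      simpa [Fin.eta, Nat.dist_eq_sub_of_le h] using this
    · have := base s r h (by omega)
      rw [norm_sub_rev]
      simpa [Fin.eta, Nat.dist_eq_sub_of_le_right h] using this
  -- sum of all pairwise distances
  have hsum : (∑ r : Fin (T+1), ∑ s : Fin (T+1), ‖η s - η r‖^2)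
      = 2 * ((T:ℝ)+1) * ∑ s, ‖η s‖^2 := by
    have expand : ∀ r s : Fin (T+1), ‖η s - η r‖^2
        = ‖η s‖^2 + ‖η r‖^2 - 2 * (inner ℂ (η r) (η s) : ℂ).re := by
      intro r s
      have h1 : ‖η s - η r‖^2 = ‖η s‖^2 - 2 * (inner ℂ (η s) (η r) : ℂ).re + ‖η r‖^2 := by
        have := @norm_sub_sq ℂ _ _ _ _ (η s) (η r)
        simpa using this
      have h2 : (inner ℂ (η s) (η r) : ℂ).re = (inner ℂ (η r) (η s) : ℂ).re := by
        have := inner_re_symm (𝕜 := ℂ) (η s) (η r)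
        simpa using this
      rw [h1, h2]; ring
    simp_rw [expand]
    have hz : (∑ r : Fin (T+1), ∑ s : Fin (T+1), (inner ℂ (η r) (η s) : ℂ).re) = 0 := by
      have : (∑ r : Fin (T+1), ∑ s : Fin (T+1), (inner ℂ (η r) (η s) : ℂ))
          = inner ℂ (∑ r, η r) (∑ s, η s) := by
        rw [sum_inner]
        exact Finset.sum_congr rfl fun r _ => (inner_sum _ _ _).symm
      have h2 : (∑ r : Fin (T+1), ∑ s : Fin (T+1), (inner ℂ (η r) (η s) : ℂ)) = 0 := by
        rw [this, h0, inner_zero_left]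
      calc (∑ r : Fin (T+1), ∑ s : Fin (T+1), (inner ℂ (η r) (η s) : ℂ).re)
          = (∑ r : Fin (T+1), ∑ s : Fin (T+1), (inner ℂ (η r) (η s) : ℂ)).re := by
            simp [Complex.re_sum]
        _ = 0 := by rw [h2]; simp
    simp only [Finset.sum_sub_distrib, Finset.sum_add_distrib, Finset.sum_const,
      Finset.card_univ, Fintype.card_fin, nsmul_eq_mul, ← Finset.mul_sum]
    rw [hz]
    push_cast
    ring
  -- combine
  have hfin : (∑ r : Fin (T+1), ∑ s : Fin (T+1), ‖η s - η r‖^2)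
      ≤ (∑ r : Fin (T+1), ∑ s : Fin (T+1), ((Nat.dist r s : ℕ) : ℝ)) * D := by
    rw [Finset.sum_mul]
    apply Finset.sum_le_sum
    intro r _
    rw [Finset.sum_mul]
    exact Finset.sum_le_sum fun s _ => hpair r s
  have hcast : (∑ r : Fin (T+1), ∑ s : Fin (T+1), ((Nat.dist r s : ℕ) : ℝ))
      = ((∑ r ∈ range (T+1), ∑ s ∈ range (T+1), Nat.dist r s : ℕ) : ℝ) := by
    push_cast
    rw [← Fin.sum_univ_eq_sum_range (fun r => ∑ s ∈ range (T+1), ((Nat.dist r s : ℕ):ℝ)) (T+1)]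
    apply Finset.sum_congr rfl
    intro r _
    rw [← Fin.sum_univ_eq_sum_range (fun s => ((Nat.dist r s : ℕ):ℝ)) (T+1)]
  have hcount : (∑ r : Fin (T+1), ∑ s : Fin (T+1), ((Nat.dist r s : ℕ) : ℝ))
      ≤ ((T:ℝ)+1)^3 / 2 := by
    rw [hcast]
    have h := dist_sum_bound (T+1)
    have h2 : ((2 * ∑ r ∈ range (T+1), ∑ s ∈ range (T+1), Nat.dist r s : ℕ) : ℝ)
        ≤ (((T+1)^3 : ℕ) : ℝ) := Nat.cast_le.mpr h
    push_cast at h2 ⊢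
    linarith
  have key : 2 * ((T:ℝ)+1) * (∑ s, ‖η s‖^2) ≤ (((T:ℝ)+1)^3 / 2) * D := by
    rw [← hsum]
    exact hfin.trans (mul_le_mul_of_nonneg_right hcount hDnn)
  have hpos : (0:ℝ) < (T:ℝ)+1 := by positivity
  nlinarith [key, hpos, hDnn]

lemma kron_mulVec {d T : ℕ} (A : Matrix (Fin d) (Fin d) ℂ) (a b : Fin (T+1))
    (ψ : Fin d × Fin (T+1) → ℂ) (p : Fin d × Fin (T+1)) :
    ((A ⊗ₖ single a b (1:ℂ)) *ᵥ ψ) p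
      = if p.2 = a then (A *ᵥ fun i => ψ (i, b)) p.1 else 0 := by
  rcases p with ⟨i, s⟩
  simp only [Matrix.mulVec, dotProduct, Fintype.sum_prod_type, Matrix.kroneckerMap_apply,
    Matrix.single, Matrix.of_apply]
  by_cases h : s = a
  · subst h
    simp [Finset.sum_ite_eq, mul_comm]
  · have ha : a ≠ s := fun e => h e.symm
    rw [if_neg h, Finset.sum_eq_zero]
    intro j _
    rw [Finset.sum_eq_zero]
    intro r _
    simp [ha]

lemma kron_dot {d T : ℕ} (A : Matrix (Fin d) (Fin d) ℂ) (a b : Fin (T+1))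
    (χ ψ : Fin d × Fin (T+1) → ℂ) :
    star χ ⬝ᵥ (A ⊗ₖ single a b (1:ℂ)) *ᵥ ψ
      = star (fun i => χ (i,a)) ⬝ᵥ (A *ᵥ fun i => ψ (i,b)) := by
  simp only [dotProduct, Pi.star_apply, kron_mulVec, Fintype.sum_prod_type, mul_ite, mul_zero]
  rw [Finset.sum_comm]
  simp [Finset.sum_ite_eq']

-- partial products of the circuit
noncomputable def Vmat (d T : ℕ) (U : Fin T → Matrix (Fin d) (Fin d) ℂ) : ℕ → Matrix (Fin d) (Fin d) ℂ
  | 0 => 1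
  | n+1 => if h : n < T then U ⟨n, h⟩ * Vmat d T U n else Vmat d T U n

lemma sum_mulVec' {ι m n : Type*} [Fintype n] (s : Finset ι)
    (M : ι → Matrix m n ℂ) (v : n → ℂ) :
    (∑ i ∈ s, M i) *ᵥ v = ∑ i ∈ s, (M i *ᵥ v) := by
  ext j
  simp only [Matrix.mulVec, dotProduct, Finset.sum_apply, Matrix.sum_apply, Finset.sum_mul]
  exact Finset.sum_comm

lemma dot_sum' {ι n : Type*} [Fintype n] (s : Finset ι) (v : n → ℂ) (w : ι → n → ℂ) :
    v ⬝ᵥ (∑ i ∈ s, w i) = ∑ i ∈ s, v ⬝ᵥ w i := by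
  simp only [dotProduct, Finset.sum_apply, Finset.mul_sum]
  exact Finset.sum_comm

variable {d T : ℕ} {U : Fin T → Matrix (Fin d) (Fin d) ℂ}
  (hU : ∀ t, U t ∈ Matrix.unitaryGroup (Fin d) ℂ)

include hU in
lemma Vmat_unitary (n : ℕ) : Vmat d T U n ∈ Matrix.unitaryGroup (Fin d) ℂ := by
  induction n with
  | zero => exact one_mem _
  | succ n ih =>
    rw [Vmat]
    split
    · exact mul_mem (hU _) ih
    · exact ih

lemma unitary_star_mul (M : Matrix (Fin d) (Fin d) ℂ)
    (hM : M ∈ Matrix.unitaryGroup (Fin d) ℂ) : Mᴴ * M = 1 := by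
  have := (Unitary.mem_iff.mp hM).1
  simpa [Matrix.star_eq_conjTranspose] using this

lemma unitary_dot (M : Matrix (Fin d) (Fin d) ℂ)
    (hM : M ∈ Matrix.unitaryGroup (Fin d) ℂ) (x y : Fin d → ℂ) :
    star (M *ᵥ x) ⬝ᵥ (M *ᵥ y) = star x ⬝ᵥ y := by
  rw [Matrix.star_mulVec, ← Matrix.dotProduct_mulVec, Matrix.mulVec_mulVec,
    unitary_star_mul M hM, Matrix.one_mulVec]

lemma star_dot_mulVec (M : Matrix (Fin d) (Fin d) ℂ) (x y : Fin d → ℂ) :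
    star (M *ᵥ x) ⬝ᵥ y = star x ⬝ᵥ (Mᴴ *ᵥ y) := by
  rw [Matrix.star_mulVec, ← Matrix.dotProduct_mulVec]

-- quadratic form identity
include hU in
lemma qf (ψ : Fin d × Fin (T+1) → ℂ) :
    star ψ ⬝ᵥ (Hprop d T U) *ᵥ ψ
      = (1/2 : ℂ) * ∑ t : Fin T,
          (star ((fun i => ψ (i, t.succ)) - U t *ᵥ (fun i => ψ (i, t.castSucc)))
            ⬝ᵥ ((fun i => ψ (i, t.succ)) - U t *ᵥ (fun i => ψ (i, t.castSucc)))) := by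
  rw [Hprop, sum_mulVec', dot_sum', Finset.mul_sum]
  apply Finset.sum_congr rfl
  intro t _
  set a : Fin d → ℂ := fun i => ψ (i, t.succ) with ha
  set b : Fin d → ℂ := fun i => ψ (i, t.castSucc) with hb
  have expand : ((1 / 2 : ℂ) • ((1 : Matrix (Fin d) (Fin d) ℂ) ⊗ₖ
        (single t.succ t.succ (1 : ℂ) + single t.castSucc t.castSucc (1 : ℂ)))
      - (1 / 2 : ℂ) • (U t ⊗ₖ single t.succ t.castSucc (1 : ℂ))
      - (1 / 2 : ℂ) • ((U t)ᴴ ⊗ₖ single t.castSucc t.succ (1 : ℂ))) *ᵥ ψ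
      = (1/2 : ℂ) • (((1 : Matrix (Fin d) (Fin d) ℂ) ⊗ₖ single t.succ t.succ (1 : ℂ)) *ᵥ ψ)
        + (1/2 : ℂ) • (((1 : Matrix (Fin d) (Fin d) ℂ) ⊗ₖ single t.castSucc t.castSucc (1 : ℂ)) *ᵥ ψ)
        - (1/2 : ℂ) • ((U t ⊗ₖ single t.succ t.castSucc (1 : ℂ)) *ᵥ ψ)
        - (1/2 : ℂ) • (((U t)ᴴ ⊗ₖ single t.castSucc t.succ (1 : ℂ)) *ᵥ ψ) := by
    rw [Matrix.sub_mulVec, Matrix.sub_mulVec, Matrix.kronecker_add]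
    simp only [Matrix.smul_mulVec, Matrix.add_mulVec, smul_add]
  have h1 : star (a - U t *ᵥ b) ⬝ᵥ (a - U t *ᵥ b)
      = star a ⬝ᵥ a + star b ⬝ᵥ b - star a ⬝ᵥ (U t *ᵥ b) - star b ⬝ᵥ ((U t)ᴴ *ᵥ a) := by
    rw [star_sub, sub_dotProduct, dotProduct_sub, dotProduct_sub]
    rw [unitary_dot (U t) (hU t) b b, star_dot_mulVec]
    ring
  rw [expand, h1]
  simp only [dotProduct_sub, dotProduct_add, dotProduct_smul]
  rw [kron_dot, kron_dot, kron_dot, kron_dot, Matrix.one_mulVec, Matrix.one_mulVec]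
  rw [← ha, ← hb]
  simp only [smul_eq_mul]
  ring

-- history states are in the kernel
include hU in
lemma hist_ker (φ : Fin d → ℂ) :
    (Hprop d T U) *ᵥ (fun p => (Vmat d T U p.2 *ᵥ φ) p.1) = 0 := by
  set χ : Fin d × Fin (T+1) → ℂ := fun p => (Vmat d T U p.2 *ᵥ φ) p.1 with hχ
  rw [Hprop, sum_mulVec']
  apply Finset.sum_eq_zero
  intro t _
  have hcol : ∀ s : Fin (T+1), (fun i => χ (i, s)) = Vmat d T U s *ᵥ φ := fun s => rfl
  have hsucc : (fun i => χ (i, t.succ)) = U t *ᵥ (fun i => χ (i, t.castSucc)) := by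
    rw [hcol, hcol]
    show Vmat d T U (t.1+1) *ᵥ φ = _
    rw [Vmat, dif_pos t.isLt, ← Matrix.mulVec_mulVec]
    rfl
  have hstar : (U t)ᴴ *ᵥ (fun i => χ (i, t.succ)) = (fun i => χ (i, t.castSucc)) := by
    rw [hsucc, Matrix.mulVec_mulVec, unitary_star_mul (U t) (hU t), Matrix.one_mulVec]
  funext p
  rw [Matrix.sub_mulVec, Matrix.sub_mulVec, Matrix.kronecker_add]
  simp only [Matrix.smul_mulVec, Matrix.add_mulVec, Pi.sub_apply, Pi.add_apply,
    Pi.smul_apply, smul_eq_mul, Pi.zero_apply]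
  rw [kron_mulVec, kron_mulVec, kron_mulVec, kron_mulVec]
  rw [Matrix.one_mulVec, Matrix.one_mulVec]
  rw [hstar]
  rw [show (U t *ᵥ fun i => χ (i, t.castSucc)) = (fun i => χ (i, t.succ)) from hsucc.symm]
  have hne : (t.succ : Fin (T+1)) ≠ t.castSucc := by
    simp only [ne_eq, Fin.ext_iff, Fin.val_succ, Fin.coe_castSucc]
    omega
  by_cases h1 : p.2 = t.succ <;> by_cases h2 : p.2 = t.castSucc <;>
    simp [h1, h2, hne, hne.symm] <;> ring

-- Hermitian
lemma kron_std_conjT (A : Matrix (Fin d) (Fin d) ℂ) (a b : Fin (T+1)) :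
    (A ⊗ₖ single a b (1:ℂ))ᴴ = Aᴴ ⊗ₖ single b a (1:ℂ) := by
  ext ⟨i,s⟩ ⟨j,r⟩
  simp only [Matrix.conjTranspose_apply, Matrix.kroneckerMap_apply, Matrix.single,
    Matrix.of_apply, star_mul']
  by_cases h : a = r ∧ b = s
  · simp [h.1, h.2, mul_comm]
  · rw [if_neg h, if_neg (fun hh => h ⟨hh.2, hh.1⟩)]
    simp

lemma Hprop_herm : (Hprop d T U)ᴴ = Hprop d T U := by
  rw [Hprop, Matrix.conjTranspose_sum]
  apply Finset.sum_congr rfl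
  intro t _
  rw [Matrix.conjTranspose_sub, Matrix.conjTranspose_sub, Matrix.conjTranspose_smul,
    Matrix.conjTranspose_smul, Matrix.conjTranspose_smul, Matrix.kronecker_add,
    Matrix.conjTranspose_add]
  rw [kron_std_conjT, kron_std_conjT, kron_std_conjT, kron_std_conjT]
  simp only [Matrix.conjTranspose_one, Matrix.conjTranspose_conjTranspose]
  rw [← Matrix.kronecker_add]
  rw [show star (1/2 : ℂ) = (1/2 : ℂ) by norm_num]
  rw [sub_right_comm]

-- bridge to EuclideanSpace
noncomputable def eL {d : ℕ} : (Fin d → ℂ) ≃ₗ[ℂ] EuclideanSpace ℂ (Fin d) :=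
  (WithLp.linearEquiv 2 ℂ (Fin d → ℂ)).symm

lemma norm_eL_sq {d : ℕ} (v : Fin d → ℂ) : ‖eL v‖^2 = (star v ⬝ᵥ v).re := by
  have h : (inner ℂ (eL v) (eL v) : ℂ) = star v ⬝ᵥ v := by
    rw [dotProduct_comm]; exact EuclideanSpace.inner_toLp_toLp v v
  have h2 := inner_self_eq_norm_sq (𝕜 := ℂ) (eL v)
  rw [h] at h2
  simpa using h2.symm

lemma dot_normSq {n : Type*} [Fintype n] (v : n → ℂ) :
    star v ⬝ᵥ v = ((∑ i, Complex.normSq (v i) : ℝ) : ℂ) := by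
  simp only [dotProduct, Pi.star_apply, Complex.ofReal_sum]
  apply Finset.sum_congr rfl
  intro i _
  rw [Complex.normSq_eq_conj_mul_self]
  rfl

lemma dot_star_self_re {n : Type*} [Fintype n] (v : n → ℂ) :
    star v ⬝ᵥ v = (((star v ⬝ᵥ v).re : ℝ) : ℂ) := by
  rw [dot_normSq]
  simp

lemma dot_star_self_re_nonneg {n : Type*} [Fintype n] (v : n → ℂ) :
    0 ≤ (star v ⬝ᵥ v).re := by
  rw [dot_normSq]
  simp only [Complex.ofReal_re]
  exact Finset.sum_nonneg fun i _ => Complex.normSq_nonneg _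

end HpropAux


/-- Every unit vector orthogonal to the kernel of the propagation Hamiltonian has
energy at least `2/(T+1)²`; equivalently, every nonzero eigenvalue of `H_prop` is
at least `2/(T+1)²`. -/
theorem Hprop_nonzero_eigenvalue_lower_bound
    (d T : ℕ) (hd : 1 ≤ d) (hT : 1 ≤ T)
    (U : Fin T → Matrix (Fin d) (Fin d) ℂ)
    (hU : ∀ t, U t ∈ Matrix.unitaryGroup (Fin d) ℂ) :
    (∀ ψ : Fin d × Fin (T + 1) → ℂ,
      star ψ ⬝ᵥ ψ = 1 →
      (∀ χ : Fin d × Fin (T + 1) → ℂ, (Hprop d T U).mulVec χ = 0 → star χ ⬝ᵥ ψ = 0) →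
      (2 : ℝ) / ((T : ℝ) + 1) ^ 2 ≤ (star ψ ⬝ᵥ (Hprop d T U).mulVec ψ).re) ∧
    (∀ (μ : ℝ) (x : Fin d × Fin (T + 1) → ℂ), x ≠ 0 →
      (Hprop d T U).mulVec x = (μ : ℂ) • x → μ ≠ 0 →
      (2 : ℝ) / ((T : ℝ) + 1) ^ 2 ≤ μ) := by
  classical
  have main : ∀ ψ : Fin d × Fin (T + 1) → ℂ,
      star ψ ⬝ᵥ ψ = 1 →
      (∀ χ : Fin d × Fin (T + 1) → ℂ, (Hprop d T U).mulVec χ = 0 → star χ ⬝ᵥ ψ = 0) →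
      (2 : ℝ) / ((T : ℝ) + 1) ^ 2 ≤ (star ψ ⬝ᵥ (Hprop d T U).mulVec ψ).re := by
    intro ψ hnorm hortho
    set ψc : Fin (T+1) → Fin d → ℂ := fun s i => ψ (i, s) with hψc
    set w : Fin (T+1) → Fin d → ℂ := fun s => (HpropAux.Vmat d T U s)ᴴ *ᵥ ψc s with hw
    set φ : Fin d → ℂ := ∑ s, w s with hφdef
    have hVu : ∀ s : Fin (T+1), (HpropAux.Vmat d T U (s:ℕ))ᴴ ∈ Matrix.unitaryGroup (Fin d) ℂ := by
      intro s
      rw [← Matrix.star_eq_conjTranspose]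
      exact Unitary.star_mem (HpropAux.Vmat_unitary hU s)
    have hφ : φ = 0 := by
      have h0 := hortho (fun p => (HpropAux.Vmat d T U p.2 *ᵥ φ) p.1) (HpropAux.hist_ker hU φ)
      have hexp : star (fun p : Fin d × Fin (T+1) => (HpropAux.Vmat d T U (p.2:ℕ) *ᵥ φ) p.1) ⬝ᵥ ψ
          = star φ ⬝ᵥ φ := by
        have e1 : star (fun p : Fin d × Fin (T+1) => (HpropAux.Vmat d T U (p.2:ℕ) *ᵥ φ) p.1) ⬝ᵥ ψ
            = ∑ s : Fin (T+1), star (HpropAux.Vmat d T U (s:ℕ) *ᵥ φ) ⬝ᵥ ψc s := by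
          simp only [dotProduct, Fintype.sum_prod_type, Pi.star_apply]
          rw [Finset.sum_comm]
        rw [e1]
        calc ∑ s : Fin (T+1), star (HpropAux.Vmat d T U (s:ℕ) *ᵥ φ) ⬝ᵥ ψc s
            = ∑ s : Fin (T+1), star φ ⬝ᵥ w s := by
              apply Finset.sum_congr rfl
              intro s _
              rw [HpropAux.star_dot_mulVec]
          _ = star φ ⬝ᵥ φ := by rw [hφdef, HpropAux.dot_sum']
      rw [hexp] at h0
      exact dotProduct_star_self_eq_zero.mp h0
    set η : Fin (T+1) → EuclideanSpace ℂ (Fin d) := fun s => HpropAux.eL (w s) with hη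
    have hη0 : ∑ s, η s = 0 := by
      have hms := map_sum HpropAux.eL w Finset.univ
      simp only [hη]
      rw [← hms, ← hφdef, hφ, map_zero]
    have hnorm_s : ∀ s : Fin (T+1), ‖η s‖^2 = (star (ψc s) ⬝ᵥ ψc s).re := by
      intro s
      simp only [hη]
      rw [HpropAux.norm_eL_sq, hw]
      exact congrArg Complex.re (HpropAux.unitary_dot _ (hVu s) (ψc s) (ψc s))
    have hηn : ∑ s, ‖η s‖^2 = 1 := by
      have hsum : ∑ s : Fin (T+1), (star (ψc s) ⬝ᵥ ψc s).re = (star ψ ⬝ᵥ ψ).re := by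
        simp only [dotProduct, Fintype.sum_prod_type, Pi.star_apply, Complex.re_sum]
        rw [Finset.sum_comm]
      simp only [hnorm_s]
      rw [hsum, hnorm]
      simp
    have hdiff : ∀ t : Fin T, η t.succ - η t.castSucc
        = HpropAux.eL ((HpropAux.Vmat d T U ((t.succ : Fin (T+1)):ℕ))ᴴ *ᵥ
            (ψc t.succ - U t *ᵥ ψc t.castSucc)) := by
      intro t
      have hVt : (HpropAux.Vmat d T U ((t:ℕ)+1))ᴴ * U t = (HpropAux.Vmat d T U (t:ℕ))ᴴ := by
        rw [HpropAux.Vmat, dif_pos t.isLt, Matrix.conjTranspose_mul, Matrix.mul_assoc]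
        rw [show (U ⟨(t:ℕ), t.isLt⟩ : Matrix (Fin d) (Fin d) ℂ) = U t by congr]
        rw [HpropAux.unitary_star_mul _ (hU t), Matrix.mul_one]
      have key : w t.succ - w t.castSucc
          = (HpropAux.Vmat d T U ((t.succ : Fin (T+1)):ℕ))ᴴ *ᵥ
              (ψc t.succ - U t *ᵥ ψc t.castSucc) := by
        rw [Matrix.mulVec_sub, Matrix.mulVec_mulVec,
          show (HpropAux.Vmat d T U ((t.succ : Fin (T+1)):ℕ))ᴴ * U t
            = (HpropAux.Vmat d T U ((t.castSucc : Fin (T+1)):ℕ))ᴴ from by simpa using hVt]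
      simp only [hη]
      rw [← map_sub, key]
    have hqf : (star ψ ⬝ᵥ (Hprop d T U) *ᵥ ψ).re
        = (1/2 : ℝ) * ∑ t : Fin T, ‖η t.succ - η t.castSucc‖^2 := by
      rw [HpropAux.qf hU ψ]
      have hterm : ∀ t : Fin T,
          ‖η t.succ - η t.castSucc‖^2
          = (star ((fun i => ψ (i, t.succ)) - U t *ᵥ (fun i => ψ (i, t.castSucc)))
              ⬝ᵥ ((fun i => ψ (i, t.succ)) - U t *ᵥ (fun i => ψ (i, t.castSucc)))).re := by
        intro t
        rw [hdiff t, HpropAux.norm_eL_sq,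
          HpropAux.unitary_dot _ (hVu t.succ) _ _]
      rw [show (1/2 : ℂ) = ((1/2:ℝ) : ℂ) by norm_num, Complex.re_ofReal_mul, Complex.re_sum]
      congr 1
      apply Finset.sum_congr rfl
      intro t _
      exact (hterm t).symm
    have hp := HpropAux.poincare T η hη0
    rw [hηn] at hp
    show (2 : ℝ) / ((T : ℝ) + 1) ^ 2 ≤ (star ψ ⬝ᵥ (Hprop d T U) *ᵥ ψ).re
    rw [hqf]
    have hpos : (0:ℝ) < ((T:ℝ)+1)^2 := by positivity
    rw [div_le_iff₀ hpos]
    nlinarith [hp]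
  refine ⟨main, ?_⟩
  intro μ x hx heig hμ
  set c : ℂ := star x ⬝ᵥ x with hc
  have hcreal : c = ((c.re : ℝ) : ℂ) := HpropAux.dot_star_self_re x
  have hcne : c ≠ 0 := fun h => hx (dotProduct_star_self_eq_zero.mp h)
  have hcnn : 0 ≤ c.re := HpropAux.dot_star_self_re_nonneg x
  have hcpos : 0 < c.re := by
    rcases lt_or_eq_of_le hcnn with h | h
    · exact h
    · exfalso; apply hcne; rw [hcreal, ← h]; simp
  set r : ℝ := Real.sqrt c.re with hrdef
  have hr : 0 < r := Real.sqrt_pos.mpr hcpos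
  have hr2 : r * r = c.re := Real.mul_self_sqrt hcnn
  set k : ℂ := ((r⁻¹ : ℝ) : ℂ) with hk
  set ψ : Fin d × Fin (T+1) → ℂ := k • x with hψ
  have hstar_k : star k = k := by rw [hk]; exact Complex.conj_ofReal _
  have hψnorm : star ψ ⬝ᵥ ψ = 1 := by
    rw [hψ, star_smul, smul_dotProduct, dotProduct_smul, hstar_k, ← hc]
    rw [hcreal]
    simp only [smul_eq_mul, hk]
    push_cast
    rw [show ((r:ℂ))⁻¹ * (((r:ℂ))⁻¹ * ((c.re:ℝ):ℂ)) = (((r*r:ℝ):ℂ))⁻¹ * ((c.re:ℝ):ℂ) by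
      push_cast; ring]
    rw [hr2]
    exact inv_mul_cancel₀ (by exact_mod_cast hcpos.ne')
  have horth : ∀ χ : Fin d × Fin (T + 1) → ℂ, (Hprop d T U).mulVec χ = 0 → star χ ⬝ᵥ ψ = 0 := by
    intro χ hχ
    have h1 : star χ ᵥ* (Hprop d T U) = 0 := by
      have h := congrArg star hχ
      rw [Matrix.star_mulVec, HpropAux.Hprop_herm] at h
      simpa using h
    have h2 : star χ ⬝ᵥ ((Hprop d T U) *ᵥ x) = 0 := by
      rw [Matrix.dotProduct_mulVec, h1, zero_dotProduct]
    rw [heig, dotProduct_smul] at h2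
    have hμ' : (μ:ℂ) ≠ 0 := Complex.ofReal_ne_zero.mpr hμ
    have h3 : star χ ⬝ᵥ x = 0 := by
      rcases (show μ = 0 ∨ star χ ⬝ᵥ x = 0 by simpa using h2) with h | h
      · exact absurd h hμ
      · exact h
    rw [hψ, dotProduct_smul, h3, smul_zero]
  have heig2 : (Hprop d T U) *ᵥ ψ = (μ:ℂ) • ψ := by
    rw [hψ, Matrix.mulVec_smul, heig, smul_comm]
  have := main ψ hψnorm horth
  rw [show (Hprop d T U).mulVec ψ = (μ:ℂ) • ψ from heig2, dotProduct_smul,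
    hψnorm] at this
  simpa using this
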